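/- For all nonnegative integers m, n and complex z₁, z₂, q with q ≠ 0: h_{m,n}(z₁, z₂ | q) = Σ_{s=0}^{min(m,n)} [m choose s]_q [n choose s]_q (q;q)_s H_{m-s,n-s}(z₁, z₂ | q) · Σ_{k=0}^{s} [s choose k]_q (-1)^k q^{(m-k)(n-k)}. -/
import Mathlib


open Finset Filter

noncomputable def qPoch (a q : ℂ) (n : ℕ) : ℂ :=
  ∏ j ∈ Finset.range n, (1 - a * q ^ j)

noncomputable def qbinom (q : ℂ) : ℕ → ℕ → ℂ
  | _, 0 => 1
  | 0, _ + 1 => 0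
  | m + 1, k + 1 => qbinom q m k + q ^ (k + 1) * qbinom q m (k + 1)

/-- The first q-analogue of the 2D Hermite polynomials. -/
noncomputable def H2D (q z1 z2 : ℂ) (m n : ℕ) : ℂ :=
  ∑ k ∈ Finset.range (min m n + 1),
    qbinom q m k * qbinom q n k * (-1) ^ k * q ^ (k.choose 2) * qPoch q q k *
      z1 ^ (m - k) * z2 ^ (n - k)

/-- The second q-analogue of the 2D Hermite polynomials. -/
noncomputable def h2D (q z1 z2 : ℂ) (m n : ℕ) : ℂ :=
  ∑ j ∈ Finset.range (min m n + 1),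
    qbinom q m j * qbinom q n j * q ^ ((m - j) * (n - j)) * (-1) ^ j * qPoch q q j *
      z1 ^ (m - j) * z2 ^ (n - j)

/-- The q-2D ultraspherical (q-disk / q-Zernike) polynomials. -/
noncomputable def p2D (q b z1 z2 : ℂ) (m n : ℕ) : ℂ :=
  ∑ k ∈ Finset.range (min m n + 1),
    qbinom q m k * qbinom q n k * (-1) ^ k * q ^ (k.choose 2) * qPoch q q k *
      qPoch (b * q) q (m + n - k) * z1 ^ (m - k) * z2 ^ (n - k)

/-- The infinite q-Pochhammer product (a;q)_∞. -/
noncomputable def qPochInf (a q : ℂ) : ℂ :=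
  ∏' j : ℕ, (1 - a * q ^ j)


lemma qbinom_zero (q : ℂ) (m : ℕ) : qbinom q m 0 = 1 := by cases m <;> rfl

lemma qbinom_succ (q : ℂ) (m k : ℕ) :
    qbinom q (m+1) (k+1) = qbinom q m k + q ^ (k+1) * qbinom q m (k+1) := rfl

lemma qbinom_eq_zero (q : ℂ) : ∀ m k, m < k → qbinom q m k = 0 := by
  intro m
  induction m with
  | zero =>
    intro k hk
    match k, hk with
    | k+1, _ => rfl
  | succ m ih =>
    intro k hk
    match k, hk with
    | k+1, hk =>
      rw [qbinom_succ, ih k (by omega), ih (k+1) (by omega)]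
      ring

lemma qbinom_self (q : ℂ) (n : ℕ) : qbinom q n n = 1 := by
  induction n with
  | zero => rfl
  | succ n ih => rw [qbinom_succ, ih, qbinom_eq_zero q n (n+1) (by omega)]; ring

lemma qbinom_succ' (q : ℂ) : ∀ m k, k ≤ m →
    qbinom q (m+1) (k+1) = q ^ (m-k) * qbinom q m k + qbinom q m (k+1) := by
  intro m
  induction m with
  | zero =>
    intro k hk
    interval_cases k
    simp [qbinom_succ, qbinom_zero, qbinom_eq_zero q 0 1 (by omega), qbinom_self]
  | succ m ih =>
    intro k hk
    cases k with
    | zero =>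
      have e1 := ih 0 (by omega)
      simp only [Nat.sub_zero, qbinom_zero] at e1 ⊢
      linear_combination qbinom_succ q (m+1) 0 + q * e1 - qbinom_succ q m 0 + qbinom_zero q (m+1) - qbinom_zero q m
    | succ k' =>
      rcases Nat.lt_or_ge k' m with hlt | hge
      · obtain ⟨d, rfl⟩ : ∃ d, m = k' + d + 1 := ⟨m - k' - 1, by omega⟩
        have e1 := ih k' (by omega)
        rw [show k' + d + 1 - k' = d + 1 by omega] at e1
        have e2 := ih (k'+1) (by omega)
        rw [show k' + d + 1 - (k'+1) = d by omega] at e2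
        rw [show k' + d + 1 + 1 - (k'+1) = d + 1 by omega]
        linear_combination qbinom_succ q (k'+d+1+1) (k'+1) + e1 -
          q^(d+1) * qbinom_succ q (k'+d+1) k' + q^(k'+2) * e2 -
          qbinom_succ q (k'+d+1) (k'+1)
      · have hk' : k' = m := by omega
        subst hk'
        rw [qbinom_succ, qbinom_self, qbinom_eq_zero q (k'+1) (k'+2) (by omega),
          show k'+1-(k'+1) = 0 by omega]
        ring

lemma qPoch_zero (a q : ℂ) : qPoch a q 0 = 1 := by simp [qPoch]

lemma qPoch_succ (a q : ℂ) (n : ℕ) :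
    qPoch a q (n+1) = qPoch a q n * (1 - a * q ^ n) := Finset.prod_range_succ _ _

lemma qbinom_mul_poch (q : ℂ) : ∀ m k, k ≤ m →
    qbinom q m k * qPoch q q k * qPoch q q (m-k) = qPoch q q m := by
  intro m
  induction m with
  | zero =>
    intro k hk
    interval_cases k
    simp [qbinom_zero, qPoch_zero]
  | succ m ih =>
    intro k hk
    cases k with
    | zero => simp [qbinom_zero, qPoch_zero]
    | succ k' =>
      rcases Nat.lt_or_ge k' m with hlt | hge
      · obtain ⟨d, rfl⟩ : ∃ d, m = k' + d + 1 := ⟨m - k' - 1, by omega⟩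
        have e1 := ih k' (by omega)
        rw [show k' + d + 1 - k' = d + 1 by omega] at e1
        have e2 := ih (k'+1) (by omega)
        rw [show k' + d + 1 - (k'+1) = d by omega] at e2
        rw [show k' + d + 1 + 1 - (k'+1) = d + 1 by omega]
        rw [qPoch_succ q q d] at e1
        rw [qPoch_succ q q k'] at e2
        rw [qbinom_succ, qPoch_succ q q k', qPoch_succ q q d,
          qPoch_succ q q (k'+d+1)]
        linear_combination (1 - q * q^k') * e1 +
          q^(k'+1) * (1 - q * q^d) * e2
      · have hk' : k' = m := by omega
        subst hk'
        rw [qbinom_succ, qbinom_self, qbinom_eq_zero q k' (k'+1) (by omega),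
          show k'+1-(k'+1) = 0 by omega, qPoch_zero]
        ring
lemma qbinom_mul_qbinom (q : ℂ) : ∀ m s t, t ≤ s →
    qbinom q m s * qbinom q s t = qbinom q m t * qbinom q (m-t) (s-t) := by
  intro m
  induction m with
  | zero =>
    intro s t ht
    cases t with
    | zero => simp [qbinom_zero]
    | succ t' =>
      match s, ht with
      | s'+1, _ =>
        rw [qbinom_eq_zero q 0 (s'+1) (by omega), qbinom_eq_zero q 0 (t'+1) (by omega)]
        ring
  | succ m ih =>
    intro s t ht
    cases t with
    | zero => simp [qbinom_zero]
    | succ t' =>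
      match s, ht with
      | s'+1, ht =>
        by_cases hA : t' = s'
        · subst hA
          rw [qbinom_self, Nat.sub_self, qbinom_zero]
          try ring
        · have hts : t' + 1 ≤ s' := by omega
          by_cases hB : m ≤ t'
          · rw [qbinom_succ q m s', qbinom_eq_zero q m s' (by omega),
              qbinom_eq_zero q m (s'+1) (by omega),
              show m+1-(t'+1) = 0 by omega,
              qbinom_eq_zero q 0 (s'+1-(t'+1)) (by omega)]
            ring
          · obtain ⟨e, rfl⟩ : ∃ e, m = t' + e + 1 := ⟨m - t' - 1, by omega⟩
            obtain ⟨f, rfl⟩ : ∃ f, s' = t' + f + 1 := ⟨s' - t' - 1, by omega⟩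
            have i1 := ih (t'+f+1) t' (by omega)
            have i2 := ih (t'+f+1) (t'+1) (by omega)
            have i3 := ih (t'+f+2) (t'+1) (by omega)
            rw [show t'+e+1-t' = e+1 by omega, show t'+f+1-t' = f+1 by omega] at i1
            rw [show t'+e+1-(t'+1) = e by omega, show t'+f+1-(t'+1) = f by omega] at i2
            rw [show t'+e+1-(t'+1) = e by omega, show t'+f+2-(t'+1) = f+1 by omega] at i3
            rw [show t'+e+1+1-(t'+1) = e+1 by omega, show t'+f+1+1-(t'+1) = f+1 by omega]
            rw [qbinom_succ q e f] at i1
            rw [qbinom_succ q (t'+f+1) t'] at i3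
            rw [qbinom_succ q (t'+e+1) (t'+f+1), qbinom_succ q (t'+f+1) t',
              qbinom_succ q (t'+e+1) t', qbinom_succ q e f]
            linear_combination i1 + q^(t'+1) * i2 + q^(t'+f+2) * i3
lemma choose_two_succ (a : ℕ) : (a+1).choose 2 = a + a.choose 2 := by
  rw [show (2:ℕ) = 1+1 from rfl, Nat.choose_succ_succ, Nat.choose_one_right]

lemma altsum_aux (q : ℂ) (M : ℕ) :
    ∑ r ∈ Finset.range (M+2), qbinom q (M+1) r * (-1:ℂ)^r * q^((M+1-r).choose 2) = 0 := by
  have h1 : ∑ r ∈ Finset.range (M+2), qbinom q (M+1) r * (-1:ℂ)^r * q^((M+1-r).choose 2)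
      = (∑ i ∈ Finset.range (M+1),
          qbinom q (M+1) (i+1) * (-1:ℂ)^(i+1) * q^((M+1-(i+1)).choose 2))
        + qbinom q (M+1) 0 * (-1:ℂ)^0 * q^((M+1-0).choose 2) :=
    Finset.sum_range_succ' _ (M+1)
  have h2 : ∑ i ∈ Finset.range (M+1),
        qbinom q (M+1) (i+1) * (-1:ℂ)^(i+1) * q^((M+1-(i+1)).choose 2)
      = ∑ i ∈ Finset.range (M+1),
        (-(qbinom q M i * (-1:ℂ)^i * q^((M+1-i).choose 2))
          + qbinom q M (i+1) * (-1:ℂ)^(i+1) * q^((M+1-(i+1)).choose 2)) := by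
    refine Finset.sum_congr rfl fun i hi => ?_
    rw [Finset.mem_range] at hi
    rw [qbinom_succ' q M i (by omega), show M+1-(i+1) = M-i by omega,
      show M+1-i = (M-i)+1 by omega, choose_two_succ, pow_add]
    ring
  have h3 : ∑ i ∈ Finset.range (M+1),
        (-(qbinom q M i * (-1:ℂ)^i * q^((M+1-i).choose 2))
          + qbinom q M (i+1) * (-1:ℂ)^(i+1) * q^((M+1-(i+1)).choose 2))
      = -(∑ i ∈ Finset.range (M+1), qbinom q M i * (-1:ℂ)^i * q^((M+1-i).choose 2))
        + ∑ i ∈ Finset.range (M+1),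
            qbinom q M (i+1) * (-1:ℂ)^(i+1) * q^((M+1-(i+1)).choose 2) := by
    rw [Finset.sum_add_distrib, Finset.sum_neg_distrib]
  have h4 : ∑ r ∈ Finset.range (M+2), qbinom q M r * (-1:ℂ)^r * q^((M+1-r).choose 2)
      = (∑ i ∈ Finset.range (M+1), qbinom q M i * (-1:ℂ)^i * q^((M+1-i).choose 2))
        + qbinom q M (M+1) * (-1:ℂ)^(M+1) * q^((M+1-(M+1)).choose 2) :=
    Finset.sum_range_succ _ (M+1)
  have h5 : ∑ r ∈ Finset.range (M+2), qbinom q M r * (-1:ℂ)^r * q^((M+1-r).choose 2)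
      = (∑ i ∈ Finset.range (M+1),
          qbinom q M (i+1) * (-1:ℂ)^(i+1) * q^((M+1-(i+1)).choose 2))
        + qbinom q M 0 * (-1:ℂ)^0 * q^((M+1-0).choose 2) :=
    Finset.sum_range_succ' _ (M+1)
  have h6 : qbinom q M (M+1) = 0 := qbinom_eq_zero q M (M+1) (by omega)
  have h7 : qbinom q (M+1) 0 = 1 := qbinom_zero q (M+1)
  have h8 : qbinom q M 0 = 1 := qbinom_zero q M
  linear_combination h1 + h2 + h3 + h4 - h5 +
    ((-1:ℂ)^(M+1) * q^((M+1-(M+1)).choose 2)) * h6 +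
    ((-1:ℂ)^0 * q^((M+1-0).choose 2)) * h7 -
    ((-1:ℂ)^0 * q^((M+1-0).choose 2)) * h8

lemma altsum (q : ℂ) (N : ℕ) :
    ∑ r ∈ Finset.range (N+1), qbinom q N r * (-1:ℂ)^(N-r) * q^((N-r).choose 2)
      = if N = 0 then 1 else 0 := by
  cases N with
  | zero => simp [qbinom_zero]
  | succ M =>
    rw [if_neg (Nat.succ_ne_zero M)]
    have step : ∀ r ∈ Finset.range (M+2),
        qbinom q (M+1) r * (-1:ℂ)^(M+1-r) * q^((M+1-r).choose 2)
          = (-1:ℂ)^(M+1) * (qbinom q (M+1) r * (-1:ℂ)^r * q^((M+1-r).choose 2)) := by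
      intro r hr
      rw [Finset.mem_range] at hr
      have h2 : (-1:ℂ)^(M+1-r) * (-1:ℂ)^r = (-1:ℂ)^(M+1) := by
        rw [← pow_add, show M+1-r+r = M+1 by omega]
      have h3 : (-1:ℂ)^r * (-1:ℂ)^r = 1 := by
        rw [← pow_add, ← two_mul, pow_mul]; norm_num
      linear_combination (qbinom q (M+1) r * q^((M+1-r).choose 2) * (-1:ℂ)^r) * h2 -
        (qbinom q (M+1) r * q^((M+1-r).choose 2) * (-1:ℂ)^(M+1-r)) * h3
    rw [Finset.sum_congr rfl step, ← Finset.mul_sum, altsum_aux, mul_zero]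
lemma tri (f : ℕ → ℕ → ℂ) : ∀ M, (∑ s ∈ Finset.range (M+1), ∑ k ∈ Finset.range (M+1-s), f s k)
    = ∑ j ∈ Finset.range (M+1), ∑ s ∈ Finset.range (j+1), f s (j-s) := by
  intro M
  induction M with
  | zero => simp
  | succ M ih =>
    have l1 : (∑ s ∈ Finset.range (M+2), ∑ k ∈ Finset.range (M+2-s), f s k)
        = (∑ s ∈ Finset.range (M+1), ∑ k ∈ Finset.range (M+2-s), f s k)
          + ∑ k ∈ Finset.range (M+2-(M+1)), f (M+1) k :=
      Finset.sum_range_succ _ (M+1)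
    have l2 : (∑ s ∈ Finset.range (M+1), ∑ k ∈ Finset.range (M+2-s), f s k)
        = ∑ s ∈ Finset.range (M+1),
            ((∑ k ∈ Finset.range (M+1-s), f s k) + f s (M+1-s)) := by
      refine Finset.sum_congr rfl fun s hs => ?_
      rw [Finset.mem_range] at hs
      rw [show M+2-s = (M+1-s)+1 by omega, Finset.sum_range_succ]
    have l3 : (∑ s ∈ Finset.range (M+1),
          ((∑ k ∈ Finset.range (M+1-s), f s k) + f s (M+1-s)))
        = (∑ s ∈ Finset.range (M+1), ∑ k ∈ Finset.range (M+1-s), f s k)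
          + ∑ s ∈ Finset.range (M+1), f s (M+1-s) := Finset.sum_add_distrib
    have r1 : (∑ j ∈ Finset.range (M+2), ∑ s ∈ Finset.range (j+1), f s (j-s))
        = (∑ j ∈ Finset.range (M+1), ∑ s ∈ Finset.range (j+1), f s (j-s))
          + ∑ s ∈ Finset.range (M+2), f s (M+1-s) :=
      Finset.sum_range_succ _ (M+1)
    have r2 : (∑ s ∈ Finset.range (M+2), f s (M+1-s))
        = (∑ s ∈ Finset.range (M+1), f s (M+1-s)) + f (M+1) (M+1-(M+1)) :=
      Finset.sum_range_succ _ (M+1)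
    have l4 : (∑ k ∈ Finset.range (M+2-(M+1)), f (M+1) k) = f (M+1) 0 := by
      rw [show M+2-(M+1) = 1 by omega, Finset.sum_range_one]; try norm_num
    rw [show M+1-(M+1) = 0 by omega] at r2
    linear_combination l1 + l2 + l3 + l4 - r1 - r2 + ih

lemma tri2 (f : ℕ → ℕ → ℂ) : ∀ M, (∑ s ∈ Finset.range (M+1), ∑ t ∈ Finset.range (s+1), f s t)
    = ∑ t ∈ Finset.range (M+1), ∑ s ∈ Finset.range (M+1-t), f (s+t) t := by
  intro M
  induction M with
  | zero => simp
  | succ M ih =>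
    have l1 : (∑ s ∈ Finset.range (M+2), ∑ t ∈ Finset.range (s+1), f s t)
        = (∑ s ∈ Finset.range (M+1), ∑ t ∈ Finset.range (s+1), f s t)
          + ∑ t ∈ Finset.range (M+2), f (M+1) t :=
      Finset.sum_range_succ _ (M+1)
    have r1 : (∑ t ∈ Finset.range (M+2), ∑ s ∈ Finset.range (M+2-t), f (s+t) t)
        = (∑ t ∈ Finset.range (M+1), ∑ s ∈ Finset.range (M+2-t), f (s+t) t)
          + ∑ s ∈ Finset.range (M+2-(M+1)), f (s+(M+1)) (M+1) :=
      Finset.sum_range_succ _ (M+1)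
    have r2 : (∑ t ∈ Finset.range (M+1), ∑ s ∈ Finset.range (M+2-t), f (s+t) t)
        = ∑ t ∈ Finset.range (M+1),
            ((∑ s ∈ Finset.range (M+1-t), f (s+t) t) + f (M+1) t) := by
      refine Finset.sum_congr rfl fun t htm => ?_
      rw [Finset.mem_range] at htm
      rw [show M+2-t = (M+1-t)+1 by omega, Finset.sum_range_succ,
        show M+1-t+t = M+1 by omega]
    have r3 : (∑ t ∈ Finset.range (M+1),
          ((∑ s ∈ Finset.range (M+1-t), f (s+t) t) + f (M+1) t))
        = (∑ t ∈ Finset.range (M+1), ∑ s ∈ Finset.range (M+1-t), f (s+t) t)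
          + ∑ t ∈ Finset.range (M+1), f (M+1) t := Finset.sum_add_distrib
    have r4 : (∑ s ∈ Finset.range (M+2-(M+1)), f (s+(M+1)) (M+1)) = f (M+1) (M+1) := by
      rw [show M+2-(M+1) = 1 by omega, Finset.sum_range_one]; try norm_num
    have l2 : (∑ t ∈ Finset.range (M+2), f (M+1) t)
        = (∑ t ∈ Finset.range (M+1), f (M+1) t) + f (M+1) (M+1) :=
      Finset.sum_range_succ _ (M+1)
    linear_combination l1 + l2 - r1 - r2 - r3 - r4 + ih
lemma key (q : ℂ) (m n j : ℕ) :
    (∑ s ∈ Finset.range (j+1), qbinom q j s * (-1:ℂ)^(j-s) * q^((j-s).choose 2) *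
      ∑ t ∈ Finset.range (s+1), qbinom q s t * (-1:ℂ)^t * q^((m-t)*(n-t)))
    = (-1:ℂ)^j * q^((m-j)*(n-j)) := by
  have e0 : (∑ s ∈ Finset.range (j+1), qbinom q j s * (-1:ℂ)^(j-s) * q^((j-s).choose 2) *
      ∑ t ∈ Finset.range (s+1), qbinom q s t * (-1:ℂ)^t * q^((m-t)*(n-t)))
      = ∑ s ∈ Finset.range (j+1), ∑ t ∈ Finset.range (s+1),
          qbinom q j s * (-1:ℂ)^(j-s) * q^((j-s).choose 2) *
            (qbinom q s t * (-1:ℂ)^t * q^((m-t)*(n-t))) :=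
    Finset.sum_congr rfl fun s _ => Finset.mul_sum _ _ _
  have e1 : (∑ s ∈ Finset.range (j+1), ∑ t ∈ Finset.range (s+1),
          qbinom q j s * (-1:ℂ)^(j-s) * q^((j-s).choose 2) *
            (qbinom q s t * (-1:ℂ)^t * q^((m-t)*(n-t))))
      = ∑ t ∈ Finset.range (j+1), ∑ s ∈ Finset.range (j+1-t),
          qbinom q j (s+t) * (-1:ℂ)^(j-(s+t)) * q^((j-(s+t)).choose 2) *
            (qbinom q (s+t) t * (-1:ℂ)^t * q^((m-t)*(n-t))) :=
    tri2 (fun s t => qbinom q j s * (-1:ℂ)^(j-s) * q^((j-s).choose 2) *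
      (qbinom q s t * (-1:ℂ)^t * q^((m-t)*(n-t)))) j
  have e2 : ∀ t ∈ Finset.range (j+1),
      (∑ s ∈ Finset.range (j+1-t),
        qbinom q j (s+t) * (-1:ℂ)^(j-(s+t)) * q^((j-(s+t)).choose 2) *
          (qbinom q (s+t) t * (-1:ℂ)^t * q^((m-t)*(n-t))))
      = qbinom q j t * ((-1:ℂ)^t * q^((m-t)*(n-t))) *
          (if j - t = 0 then 1 else 0) := by
    intro t htj
    rw [Finset.mem_range] at htj
    rw [show j+1-t = (j-t)+1 by omega]
    have e3 : ∀ s ∈ Finset.range ((j-t)+1),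
        qbinom q j (s+t) * (-1:ℂ)^(j-(s+t)) * q^((j-(s+t)).choose 2) *
          (qbinom q (s+t) t * (-1:ℂ)^t * q^((m-t)*(n-t)))
        = qbinom q j t * ((-1:ℂ)^t * q^((m-t)*(n-t))) *
            (qbinom q (j-t) s * (-1:ℂ)^((j-t)-s) * q^(((j-t)-s).choose 2)) := by
      intro s hs
      rw [Finset.mem_range] at hs
      have hS := qbinom_mul_qbinom q j (s+t) t (by omega)
      rw [show (s+t)-t = s by omega] at hS
      rw [show j-(s+t) = (j-t)-s by omega]
      linear_combination ((-1:ℂ)^((j-t)-s) * q^(((j-t)-s).choose 2) *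
        ((-1:ℂ)^t * q^((m-t)*(n-t)))) * hS
    rw [Finset.sum_congr rfl e3, ← Finset.mul_sum, altsum q (j-t)]
  rw [e0, e1, Finset.sum_congr rfl e2]
  rw [Finset.sum_eq_single j]
  · rw [Nat.sub_self, if_pos rfl, qbinom_self]; ring
  · intro b hb hbj
    rw [Finset.mem_range] at hb
    rw [if_neg (by omega), mul_zero]
  · intro h
    exact absurd (Finset.self_mem_range_succ j) h
theorem stmt15 (m n : ℕ) (z1 z2 q : ℂ) (hq : q ≠ 0) :
    h2D q z1 z2 m n =
      ∑ s ∈ Finset.range (min m n + 1),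
        qbinom q m s * qbinom q n s * qPoch q q s * H2D q z1 z2 (m - s) (n - s) *
          ∑ k ∈ Finset.range (s + 1),
            qbinom q s k * (-1) ^ k * q ^ ((m - k) * (n - k)) := by
  have step1 : ∀ s ∈ Finset.range (min m n + 1),
      qbinom q m s * qbinom q n s * qPoch q q s * H2D q z1 z2 (m - s) (n - s) *
          (∑ k ∈ Finset.range (s + 1), qbinom q s k * (-1:ℂ) ^ k * q ^ ((m - k) * (n - k)))
      = ∑ k ∈ Finset.range (min m n + 1 - s),
          qbinom q m s * qbinom q n s * qPoch q q s *
            (qbinom q (m-s) k * qbinom q (n-s) k * (-1:ℂ)^k * q^(k.choose 2) * qPoch q q k *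
              z1^(m-s-k) * z2^(n-s-k)) *
            (∑ t ∈ Finset.range (s + 1), qbinom q s t * (-1:ℂ)^t * q^((m-t)*(n-t))) := by
    intro s hs
    rw [Finset.mem_range] at hs
    have hmin : min (m-s) (n-s) = min m n - s := by omega
    simp only [H2D, hmin]
    rw [show min m n - s + 1 = min m n + 1 - s by omega, ← Finset.sum_mul, ← Finset.mul_sum]
  rw [Finset.sum_congr rfl step1]
  have step2 : (∑ s ∈ Finset.range (min m n + 1), ∑ k ∈ Finset.range (min m n + 1 - s),
        qbinom q m s * qbinom q n s * qPoch q q s *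
          (qbinom q (m-s) k * qbinom q (n-s) k * (-1:ℂ)^k * q^(k.choose 2) * qPoch q q k *
            z1^(m-s-k) * z2^(n-s-k)) *
          (∑ t ∈ Finset.range (s + 1), qbinom q s t * (-1:ℂ)^t * q^((m-t)*(n-t))))
      = ∑ j ∈ Finset.range (min m n + 1), ∑ s ∈ Finset.range (j+1),
          qbinom q m s * qbinom q n s * qPoch q q s *
            (qbinom q (m-s) (j-s) * qbinom q (n-s) (j-s) * (-1:ℂ)^(j-s) * q^((j-s).choose 2) *
              qPoch q q (j-s) * z1^(m-s-(j-s)) * z2^(n-s-(j-s))) *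
            (∑ t ∈ Finset.range (s + 1), qbinom q s t * (-1:ℂ)^t * q^((m-t)*(n-t))) :=
    tri (fun s k =>
      qbinom q m s * qbinom q n s * qPoch q q s *
        (qbinom q (m-s) k * qbinom q (n-s) k * (-1:ℂ)^k * q^(k.choose 2) * qPoch q q k *
          z1^(m-s-k) * z2^(n-s-k)) *
        (∑ t ∈ Finset.range (s + 1), qbinom q s t * (-1:ℂ)^t * q^((m-t)*(n-t)))) (min m n)
  rw [step2]
  have step3 : ∀ j ∈ Finset.range (min m n + 1),
      (∑ s ∈ Finset.range (j+1),
        qbinom q m s * qbinom q n s * qPoch q q s *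
          (qbinom q (m-s) (j-s) * qbinom q (n-s) (j-s) * (-1:ℂ)^(j-s) * q^((j-s).choose 2) *
            qPoch q q (j-s) * z1^(m-s-(j-s)) * z2^(n-s-(j-s))) *
          (∑ t ∈ Finset.range (s + 1), qbinom q s t * (-1:ℂ)^t * q^((m-t)*(n-t))))
      = qbinom q m j * qbinom q n j * q^((m-j)*(n-j)) * (-1:ℂ)^j * qPoch q q j *
          z1^(m-j) * z2^(n-j) := by
    intro j hj
    rw [Finset.mem_range] at hj
    have per : ∀ s ∈ Finset.range (j+1),
        qbinom q m s * qbinom q n s * qPoch q q s *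
          (qbinom q (m-s) (j-s) * qbinom q (n-s) (j-s) * (-1:ℂ)^(j-s) * q^((j-s).choose 2) *
            qPoch q q (j-s) * z1^(m-s-(j-s)) * z2^(n-s-(j-s))) *
          (∑ t ∈ Finset.range (s + 1), qbinom q s t * (-1:ℂ)^t * q^((m-t)*(n-t)))
        = (qbinom q m j * qbinom q n j * qPoch q q j * (z1^(m-j) * z2^(n-j))) *
            (qbinom q j s * (-1:ℂ)^(j-s) * q^((j-s).choose 2) *
              (∑ t ∈ Finset.range (s + 1), qbinom q s t * (-1:ℂ)^t * q^((m-t)*(n-t)))) := by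
      intro s hs
      rw [Finset.mem_range] at hs
      have hS1 := qbinom_mul_qbinom q m j s (by omega)
      have hS2 := qbinom_mul_qbinom q n j s (by omega)
      have hP := qbinom_mul_poch q j s (by omega)
      rw [show m-s-(j-s) = m-j by omega, show n-s-(j-s) = n-j by omega]
      linear_combination
        (-(qbinom q (n-s) (j-s) * qbinom q n s * qPoch q q s * qPoch q q (j-s) *
            (-1:ℂ)^(j-s) * q^((j-s).choose 2) * z1^(m-j) * z2^(n-j) *
            (∑ t ∈ Finset.range (s + 1), qbinom q s t * (-1:ℂ)^t * q^((m-t)*(n-t))))) * hS1 +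
        (-(qbinom q m j * qbinom q j s * qPoch q q s * qPoch q q (j-s) *
            (-1:ℂ)^(j-s) * q^((j-s).choose 2) * z1^(m-j) * z2^(n-j) *
            (∑ t ∈ Finset.range (s + 1), qbinom q s t * (-1:ℂ)^t * q^((m-t)*(n-t))))) * hS2 +
        (qbinom q m j * qbinom q n j * qbinom q j s *
            (-1:ℂ)^(j-s) * q^((j-s).choose 2) * z1^(m-j) * z2^(n-j) *
            (∑ t ∈ Finset.range (s + 1), qbinom q s t * (-1:ℂ)^t * q^((m-t)*(n-t)))) * hP
    rw [Finset.sum_congr rfl per, ← Finset.mul_sum, key q m n j]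
    ring
  rw [Finset.sum_congr rfl step3]
  simp only [h2D]
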